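/- Let A and B be finite sets with each applicant in A having a strict total order on B, and let E ⊆ B with |E| = |A|. Then the following are equivalent: (1) there exists a Pareto optimal matching τ with image exactly E; (2) there exists an ordering (permutation) π of A such that the greedy matching induced by π has image exactly E; (3) there exists a matching τ with image exactly E having no blocking coalition of size one. -/

import Mathlib

open scoped Classical


/-- `S` is a blocking coalition of the matching `τ`. -/
def IsBlocking {A B : Type*} (pref : A → B → B → Prop) (τ : A → B) (S : Set A) : Prop :=
  S.Nonempty ∧ ∃ τ' : A → B, Function.Injective τ' ∧
    (∀ a ∉ S, τ' a = τ a) ∧ ∀ a ∈ S, pref a (τ' a) (τ a)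

/-- `τ` is a Pareto optimal matching. -/
def IsPOM {A B : Type*} (pref : A → B → B → Prop) (τ : A → B) : Prop :=
  Function.Injective τ ∧ ∀ S : Set A, ¬ IsBlocking pref τ S

/-- `τ` has no blocking coalition of size one. -/
def Is1POM {A B : Type*} (pref : A → B → B → Prop) (τ : A → B) : Prop :=
  ∀ a : A, ¬ IsBlocking pref τ {a}

/-- `τ` is the greedy matching obtained by processing the applicants in the
order `π`: at each step the current applicant receives its most preferred
house not taken by an earlier applicant. -/
def IsGreedy {A B : Type*} [Fintype A] (pref : A → B → B → Prop)
    (π : Fin (Fintype.card A) ≃ A) (τ : A → B) : Prop :=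
  ∀ i : Fin (Fintype.card A), ∀ b : B,
    b ≠ τ (π i) → (∀ j, j < i → b ≠ τ (π j)) → pref (π i) (τ (π i)) b

section
variable {A B : Type*} {pref : A → B → B → Prop}

lemma one_pom_iff (hpref : ∀ a, IsStrictTotalOrder B (pref a)) {τ : A → B}
    (hτ : Function.Injective τ) :
    Is1POM pref τ ↔ ∀ a b, pref a b (τ a) → b ∈ Set.range τ := by
  constructor
  · intro h a b hb
    by_contra hbr
    apply h a
    refine ⟨⟨a, rfl⟩, Function.update τ a b, ?_, ?_, ?_⟩
    · intro x y hxy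
      by_cases hx : x = a <;> by_cases hy : y = a
      · rw [hx, hy]
      · rw [hx, Function.update_self, Function.update_of_ne hy] at hxy
        exact absurd ⟨y, hxy.symm⟩ hbr
      · rw [hy, Function.update_self, Function.update_of_ne hx] at hxy
        exact absurd ⟨x, hxy⟩ hbr
      · rw [Function.update_of_ne hx, Function.update_of_ne hy] at hxy
        exact hτ hxy
    · intro x hx; simp only [Set.mem_singleton_iff] at hx
      exact Function.update_of_ne hx _ _
    · intro x hx; simp only [Set.mem_singleton_iff] at hx; subst hx
      simpa using hb
  · intro h a hblock
    obtain ⟨-, τ', hinj, hoff, hon⟩ := hblock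
    have hp := hon a rfl
    obtain ⟨a', ha'⟩ := h a (τ' a) hp
    have hne : a' ≠ a := by
      intro he
      rw [he] at ha'
      exact (hpref a).irrefl (τ a) (ha' ▸ hp)
    have heq : τ' a' = τ' a := by
      rw [hoff a' (by simpa using hne), ha']
    exact hne (hinj heq)

lemma greedy_is1pom [Fintype A] (hpref : ∀ a, IsStrictTotalOrder B (pref a))
    {π : Fin (Fintype.card A) ≃ A} {τ : A → B}
    (hτ : Function.Injective τ) (hg : IsGreedy pref π τ) : Is1POM pref τ := by
  rw [one_pom_iff hpref hτ]
  intro a b hb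
  by_contra hbr
  have hne : ∀ j, b ≠ τ (π j) := fun j h => hbr ⟨π j, h.symm⟩
  have := hg (π.symm a) b (by rw [π.apply_symm_apply]; exact fun h => hbr ⟨a, h.symm⟩) (fun j _ => hne j)
  rw [π.apply_symm_apply] at this
  exact (hpref a).irrefl b ((hpref a).trans _ _ _ hb this)

lemma exists_pom_of_1pom [Fintype A] [Fintype B]
    (hpref : ∀ a, IsStrictTotalOrder B (pref a)) (E : Finset B)
    (hE : E.card = Fintype.card A)
    (h : ∃ τ : A → B, Function.Injective τ ∧ Is1POM pref τ ∧ Set.range τ = ↑E) :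
    ∃ τ : A → B, IsPOM pref τ ∧ Set.range τ = ↑E := by
  classical
  set T : Set (A → B) :=
    {τ | Function.Injective τ ∧ Is1POM pref τ ∧ Set.range τ = ↑E} with hT
  have hTne : T.Nonempty := h
  set Φ : (A → B) → ℕ := fun τ => ∑ a : A, (Finset.univ.filter fun b => pref a b (τ a)).card
    with hΦ
  obtain ⟨τ, hτT, hmin⟩ := Set.Finite.exists_minimalFor Φ T (Set.toFinite T) hTne
  obtain ⟨hinj, h1, hrange⟩ := hτT
  refine ⟨τ, ⟨hinj, ?_⟩, hrange⟩
  intro S hS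
  obtain ⟨⟨a0, ha0⟩, τ', hinj', hoff, hon⟩ := hS
  -- τ' has values in E
  have h1' := (one_pom_iff hpref hinj).mp h1
  have hmem : ∀ a, τ' a ∈ Set.range τ := by
    intro a
    by_cases ha : a ∈ S
    · exact h1' a (τ' a) (hon a ha)
    · rw [hoff a ha]; exact ⟨a, rfl⟩
  have hrange' : Set.range τ' = ↑E := by
    have hsub : (Finset.univ.image τ') ⊆ E := by
      intro b hb
      simp only [Finset.mem_image] at hb
      obtain ⟨a, -, rfl⟩ := hb
      have := hmem a; rw [hrange] at this; exact_mod_cast this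
    have hcard : (Finset.univ.image τ').card = E.card := by
      rw [Finset.card_image_of_injective _ hinj', Finset.card_univ, hE]
    have : Finset.univ.image τ' = E := Finset.eq_of_subset_of_card_le hsub (le_of_eq hcard.symm)
    rw [← this]
    ext b; simp
  -- preference weakly improves
  have hwk : ∀ a b, pref a b (τ' a) → pref a b (τ a) := by
    intro a b hb
    by_cases ha : a ∈ S
    · exact (hpref a).trans _ _ _ hb (hon a ha)
    · rw [hoff a ha] at hb; exact hb
  have h1'' : Is1POM pref τ' := by
    rw [one_pom_iff hpref hinj']
    intro a b hb
    rw [hrange', ← hrange]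
    exact h1' a b (hwk a b hb)
  have hτ'T : τ' ∈ T := ⟨hinj', h1'', hrange'⟩
  -- Φ strictly decreases
  have hle : ∀ a, (Finset.univ.filter fun b => pref a b (τ' a)).card ≤
      (Finset.univ.filter fun b => pref a b (τ a)).card := by
    intro a
    apply Finset.card_le_card
    intro b hb
    simp only [Finset.mem_filter, Finset.mem_univ, true_and] at hb ⊢
    exact hwk a b hb
  have hlt : (Finset.univ.filter fun b => pref a0 b (τ' a0)).card <
      (Finset.univ.filter fun b => pref a0 b (τ a0)).card := by
    apply Finset.card_lt_card
    constructor
    · intro b hb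
      simp only [Finset.mem_filter, Finset.mem_univ, true_and] at hb ⊢
      exact hwk a0 b hb
    · intro hsub
      have := hsub (by simp [(hon a0 ha0)] : τ' a0 ∈ Finset.univ.filter fun b => pref a0 b (τ a0))
      simp only [Finset.mem_filter] at this
      exact (hpref a0).irrefl _ this.2
  have hΦlt : Φ τ' < Φ τ := by
    apply Finset.sum_lt_sum (fun a _ => hle a) ⟨a0, Finset.mem_univ a0, hlt⟩
  exact absurd (hmin hτ'T (le_of_lt hΦlt)) (not_le.mpr hΦlt)

lemma key_step [Fintype A] [Fintype B]
    (hpref : ∀ a, IsStrictTotalOrder B (pref a)) {τ : A → B} (hpom : IsPOM pref τ)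
    (P : Finset A) (hP : P ≠ Finset.univ) :
    ∃ a ∉ P, ∀ b, (∀ p ∈ P, b ≠ τ p) → b ≠ τ a → pref a (τ a) b := by
  classical
  obtain ⟨hinj, hnb⟩ := hpom
  have h1 : Is1POM pref τ := fun a h => hnb {a} h
  have h1' := (one_pom_iff hpref hinj).mp h1
  by_contra hcon
  push_neg at hcon
  -- every remaining applicant prefers some untaken-by-P house
  have hstep : ∀ a ∉ P, ∃ a', a' ∉ P ∧ a' ≠ a ∧ pref a (τ a') (τ a) := by
    intro a ha
    obtain ⟨b, hb1, hb2, hb3⟩ := hcon a ha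
    have hpb : pref a b (τ a) := by
      by_contra h
      exact hb2 ((hpref a).trichotomous b (τ a) h hb3)
    obtain ⟨a', ha'⟩ := h1' a b hpb
    refine ⟨a', fun hmem => hb1 a' hmem ha'.symm, ?_, ha' ▸ hpb⟩
    rintro rfl; exact hb2 ha'.symm
  -- choice function g
  have hex : ∀ a : A, ∃ a', a ∉ P → (a' ∉ P ∧ a' ≠ a ∧ pref a (τ a') (τ a)) := by
    intro a
    by_cases ha : a ∉ P
    · obtain ⟨a', h⟩ := hstep a ha; exact ⟨a', fun _ => h⟩
    · exact ⟨a, fun h => absurd h ha⟩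
  choose g hg using hex
  obtain ⟨a0, ha0⟩ : ∃ a, a ∉ P := by
    by_contra hcc
    push_neg at hcc
    exact hP (Finset.eq_univ_iff_forall.mpr hcc)
  have hxex : ∃ x, x ∉ P ∧ ∃ k, 0 < k ∧ g^[k] x = x := by
    have hiter : ∀ t, g^[t] a0 ∉ P := by
      intro t
      induction t with
      | zero => exact ha0
      | succ t ih => rw [Function.iterate_succ_apply']; exact (hg _ ih).1
    obtain ⟨i, j, hij, hEq⟩ := Finite.exists_ne_map_eq_of_infinite (fun t : ℕ => g^[t] a0)
    rcases hij.lt_or_gt with hlt | hlt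
    · refine ⟨g^[i] a0, hiter i, j - i, by omega, ?_⟩
      rw [← Function.iterate_add_apply, show j - i + i = j by omega]
      exact hEq.symm
    · refine ⟨g^[j] a0, hiter j, i - j, by omega, ?_⟩
      rw [← Function.iterate_add_apply, show i - j + j = i by omega]
      exact hEq
  obtain ⟨x, hxP, hexm⟩ := hxex
  set m := Nat.find hexm with hm
  obtain ⟨hmpos, hmx⟩ := Nat.find_spec hexm
  have hmin : ∀ k, 0 < k → k < m → g^[k] x ≠ x := by
    intro k hk1 hk2 hk3
    exact Nat.find_min hexm hk2 ⟨hk1, hk3⟩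
  have hiterx : ∀ t, g^[t] x ∉ P := by
    intro t
    induction t with
    | zero => exact hxP
    | succ t ih => rw [Function.iterate_succ_apply']; exact (hg _ ih).1
  set S : Set A := {a | ∃ t, t < m ∧ g^[t] x = a} with hS
  have hxS : x ∈ S := ⟨0, hmpos, rfl⟩
  have hSP : ∀ a ∈ S, a ∉ P := by
    rintro a ⟨t, -, rfl⟩
    exact hiterx t
  have hgS : ∀ a ∈ S, g a ∈ S := by
    rintro a ⟨t, ht, rfl⟩
    rw [show g (g^[t] x) = g^[t+1] x from (Function.iterate_succ_apply' g t x).symm]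
    rcases Nat.lt_or_ge (t + 1) m with h | h
    · exact ⟨t + 1, h, rfl⟩
    · have : t + 1 = m := by omega
      rw [this, hmx]; exact hxS
  -- injectivity of g on S
  have hgSinj : ∀ s t, s < m → t < m → g^[s + 1] x = g^[t + 1] x → s = t := by
    have haux : ∀ s t, s < t → t < m → g^[s + 1] x = g^[t + 1] x → False := by
      intro s t hst htm hEq2
      have : g^[m - 1 - t] (g^[s + 1] x) = g^[m - 1 - t] (g^[t + 1] x) := by rw [hEq2]
      rw [← Function.iterate_add_apply, ← Function.iterate_add_apply] at this
      rw [show m - 1 - t + (t + 1) = m by omega] at this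
      rw [hmx] at this
      exact hmin (m - 1 - t + (s + 1)) (by omega) (by omega) this
    intro s t hs ht hEq2
    rcases lt_trichotomy s t with h | h | h
    · exact absurd hEq2 (fun hq => haux s t h ht hq)
    · exact h
    · exact absurd hEq2.symm (fun hq => haux t s h hs hq)
  -- build the blocking coalition
  set τ' : A → B := fun a => if a ∈ S then τ (g a) else τ a with hτ'
  have hτ'S : ∀ a ∈ S, τ' a = τ (g a) := by intro a ha; simp only [hτ', if_pos ha]
  have hτ'nS : ∀ a, a ∉ S → τ' a = τ a := by intro a ha; simp only [hτ', if_neg ha]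
  have hinj' : Function.Injective τ' := by
    intro u v huv
    by_cases hu : u ∈ S <;> by_cases hv : v ∈ S
    · rw [hτ'S u hu, hτ'S v hv] at huv
      obtain ⟨s, hs, rfl⟩ := hu
      obtain ⟨t, ht, rfl⟩ := hv
      rw [show g (g^[s] x) = g^[s+1] x from (Function.iterate_succ_apply' g s x).symm,
        show g (g^[t] x) = g^[t+1] x from (Function.iterate_succ_apply' g t x).symm] at huv
      rw [hgSinj s t hs ht (hinj huv)]
    · rw [hτ'S u hu, hτ'nS v hv] at huv
      exact absurd (hinj huv ▸ hgS u hu) hv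
    · rw [hτ'nS u hu, hτ'S v hv] at huv
      exact absurd ((hinj huv).symm ▸ hgS v hv) hu
    · rw [hτ'nS u hu, hτ'nS v hv] at huv
      exact hinj huv
  apply hnb S
  refine ⟨⟨x, hxS⟩, τ', hinj', hτ'nS, ?_⟩
  intro a ha
  rw [hτ'S a ha]
  exact (hg a (hSP a ha)).2.2

lemma pom_greedy [Fintype A] [Fintype B]
    (hpref : ∀ a, IsStrictTotalOrder B (pref a)) {τ : A → B} (hpom : IsPOM pref τ) :
    ∃ π : Fin (Fintype.card A) ≃ A, IsGreedy pref π τ := by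
  classical
  rcases isEmpty_or_nonempty A with hA | hA
  · refine ⟨(Fintype.equivFin A).symm, ?_⟩
    intro i
    exact Fin.elim0 (Fin.cast Fintype.card_eq_zero i)
  have hnext : ∀ P : Finset A, ∃ a, P ≠ Finset.univ →
      (a ∉ P ∧ ∀ b, (∀ p ∈ P, b ≠ τ p) → b ≠ τ a → pref a (τ a) b) := by
    intro P
    by_cases hP : P ≠ Finset.univ
    · obtain ⟨a, h1, h2⟩ := key_step hpref hpom P hP
      exact ⟨a, fun _ => ⟨h1, h2⟩⟩
    · exact ⟨Classical.arbitrary A, fun h => absurd h hP⟩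
  choose nf hnf using hnext
  set n := Fintype.card A with hn
  set F : ℕ → Finset A := fun i => Nat.rec ∅ (fun _ Fi => insert (nf Fi) Fi) i with hF
  have hFs : ∀ i, F (i + 1) = insert (nf (F i)) (F i) := fun i => rfl
  have hcard : ∀ i, i ≤ n → (F i).card = i := by
    intro i
    induction i with
    | zero => intro _; rfl
    | succ i ih =>
      intro hi
      have hci := ih (by omega)
      have hne : F i ≠ Finset.univ := by
        intro h; rw [h, Finset.card_univ, ← hn] at hci; omega
      rw [hFs, Finset.card_insert_of_notMem ((hnf (F i) hne).1), hci]
  have hne' : ∀ i, i < n → F i ≠ Finset.univ := by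
    intro i hi h
    have := hcard i (le_of_lt hi)
    rw [h, Finset.card_univ, ← hn] at this; omega
  have hmono : ∀ i j, i ≤ j → F i ⊆ F j := by
    intro i j hij
    induction j with
    | zero => rw [Nat.le_zero.mp hij]
    | succ j ih =>
      rcases Nat.lt_or_ge i (j + 1) with h | h
      · exact (ih (by omega)).trans (by rw [hFs]; exact Finset.subset_insert _ _)
      · rw [show i = j + 1 by omega]
  have hσmem : ∀ i, i < n → nf (F i) ∉ F i := fun i hi => (hnf (F i) (hne' i hi)).1
  set σ : Fin n → A := fun i => nf (F i.val) with hσ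
  have hσinj : Function.Injective σ := by
    intro u v huv
    by_contra hne2
    rcases (Fin.val_ne_iff.mpr hne2).lt_or_gt with h | h
    · have : σ u ∈ F v.val := hmono (u.val + 1) v.val h (by rw [hFs]; exact Finset.mem_insert_self _ _)
      rw [huv] at this
      exact hσmem v.val v.2 this
    · have : σ v ∈ F u.val := hmono (v.val + 1) u.val h (by rw [hFs]; exact Finset.mem_insert_self _ _)
      rw [← huv] at this
      exact hσmem u.val u.2 this
  have hbij : Function.Bijective σ :=
    (Fintype.bijective_iff_injective_and_card σ).mpr ⟨hσinj, by simp [hn]⟩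
  refine ⟨Equiv.ofBijective σ hbij, ?_⟩
  have hFchar : ∀ i, ∀ p ∈ F i, ∃ j, j < i ∧ p = nf (F j) := by
    intro i
    induction i with
    | zero => intro p hp; exact absurd hp (Finset.notMem_empty p)
    | succ i ih =>
      intro p hp
      rw [hFs] at hp
      rcases Finset.mem_insert.mp hp with h | h
      · exact ⟨i, by omega, h⟩
      · obtain ⟨j, hj, hjp⟩ := ih p h
        exact ⟨j, by omega, hjp⟩
  intro i b hb1 hb2
  have hπ : Equiv.ofBijective σ hbij i = σ i := rfl
  rw [hπ]
  refine (hnf (F i.val) (hne' i.val i.2)).2 b ?_ ?_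
  · intro p hp
    obtain ⟨j, hj, rfl⟩ := hFchar i.val p hp
    have hjn : j < n := lt_trans hj i.2
    have := hb2 ⟨j, hjn⟩ (by exact hj)
    exact this
  · exact hb1

end


/-- for a set `E ⊆ B` with `|E| = |A|`, the following are
equivalent: `E` is the image of a POM; `E` is the image of a greedy matching;
`E` is the image of a 1-POM. -/
theorem stmt2 {A B : Type*} [Fintype A] [Fintype B] [DecidableEq B]
    (hAB : Fintype.card A ≤ Fintype.card B)
    (pref : A → B → B → Prop) (hpref : ∀ a, IsStrictTotalOrder B (pref a))
    (E : Finset B) (hE : E.card = Fintype.card A) :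
    ((∃ τ : A → B, IsPOM pref τ ∧ Set.range τ = ↑E) ↔
      ∃ (π : Fin (Fintype.card A) ≃ A) (τ : A → B),
        Function.Injective τ ∧ IsGreedy pref π τ ∧ Set.range τ = ↑E) ∧
    ((∃ τ : A → B, IsPOM pref τ ∧ Set.range τ = ↑E) ↔
      ∃ τ : A → B, Function.Injective τ ∧ Is1POM pref τ ∧ Set.range τ = ↑E) := by
  constructor
  · constructor
    · rintro ⟨τ, hpom, hr⟩
      obtain ⟨π, hg⟩ := pom_greedy hpref hpom
      exact ⟨π, τ, hpom.1, hg, hr⟩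
    · rintro ⟨π, τ, hinj, hg, hr⟩
      exact exists_pom_of_1pom hpref E hE ⟨τ, hinj, greedy_is1pom hpref hinj hg, hr⟩
  · constructor
    · rintro ⟨τ, hpom, hr⟩
      exact ⟨τ, hpom.1, fun a => hpom.2 {a}, hr⟩
    · rintro ⟨τ, hinj, h1, hr⟩
      exact exists_pom_of_1pom hpref E hE ⟨τ, hinj, h1, hr⟩
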